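/- Suppose the block operator matrix L is a bijection of X^n, let γ = (γ_{ij}) be the unique solution of L·γ = diag(Γ_1,…,Γ_n) (componentwise: γ_{ij} + Γ_i Σ_{k≠i} γ_{kj} = δ_{ij} Γ_i), and let Γ be defined by I − Γ = (I − G)^{−1}. Then the components γ_{ij} are reconstructed from Γ by the formula γ_{ij} = −δ_{ij} G_j − G_i (I − Γ) G_j. -/

import Mathlib

/-- In the setting of the alternating Schwartz method (block matrix `L`
bijective, `γ` the solution of `L ⬝ γ = diag (Γ 1, …, Γ n)`, and `Γ` defined by
`I - Γ = (I - G)⁻¹` with `G = ∑ i, G i`), the components `γ i j` are reconstructed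
from `Γ` via `γ i j = -δ_{ij} G j - G i (I - Γ) G j`. -/
theorem stmt_2 {X : Type*} [AddCommGroup X] [Module ℂ X] (n : ℕ) (hn : 1 ≤ n)
    (G Γ : Fin n → Module.End ℂ X)
    (hΓ : ∀ i, (1 - G i) * (1 - Γ i) = 1 ∧ (1 - Γ i) * (1 - G i) = 1)
    (hL : Function.Bijective (fun φ : Fin n → X =>
      fun i => φ i + Γ i (∑ k ∈ Finset.univ.erase i, φ k)))
    (γ : Fin n → Fin n → Module.End ℂ X)
    (hγ : ∀ i j, γ i j + Γ i * (∑ k ∈ Finset.univ.erase i, γ k j)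
      = if i = j then Γ i else 0)
    (Γtot : Module.End ℂ X)
    (hΓtot₁ : (1 - ∑ i, G i) * (1 - Γtot) = 1)
    (hΓtot₂ : (1 - Γtot) * (1 - ∑ i, G i) = 1) :
    ∀ i j, γ i j = -(if i = j then G j else 0) - G i * (1 - Γtot) * G j := by
  have hGi : ∀ i, (1 - G i) * Γ i = -G i := by
    intro i
    have h := (hΓ i).1
    have h2 : (1 - G i) * Γ i = (1 - G i) * 1 - (1 - G i) * (1 - Γ i) := by noncomm_ring
    rw [h2, h]; noncomm_ring
  intro i j
  set S : Module.End ℂ X := ∑ k, γ k j with hSdef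
  have key : ∀ i, γ i j = -(if i = j then G i else 0) + G i * S := by
    intro i
    have h1 := hγ i j
    rw [Finset.sum_erase_eq_sub (Finset.mem_univ i)] at h1
    have h2 : (1 - Γ i) * γ i j = (if i = j then Γ i else 0) - Γ i * S := by
      rw [← h1]; noncomm_ring
    have h3 : γ i j = (1 - G i) * ((if i = j then Γ i else 0) - Γ i * S) := by
      rw [← h2, ← mul_assoc, (hΓ i).1, one_mul]
    rw [h3]
    by_cases hij : i = j
    · simp only [hij, if_pos]
      rw [mul_sub, ← mul_assoc, hGi j]
      noncomm_ring
    · simp only [hij, if_neg, not_false_iff]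
      rw [mul_sub, ← mul_assoc, hGi i]
      noncomm_ring
  have hSum : S = -G j + (∑ k, G k) * S := by
    calc S = ∑ k, γ k j := hSdef
    _ = ∑ k, (-(if k = j then G k else 0) + G k * S) := Finset.sum_congr rfl fun k _ => key k
    _ = -(∑ k, (if k = j then G k else 0)) + (∑ k, G k) * S := by
        rw [Finset.sum_add_distrib, ← Finset.sum_neg_distrib, Finset.sum_mul]
    _ = -G j + (∑ k, G k) * S := by rw [Finset.sum_ite_eq' Finset.univ j G]; simp
  have h4 : (1 - ∑ k, G k) * S = -G j := by
    have h5 : (1 - ∑ k, G k) * S = S - (∑ k, G k) * S := by noncomm_ring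
    rw [h5]
    nth_rewrite 1 [hSum]
    noncomm_ring
  have hSval : S = -((1 - Γtot) * G j) := by
    calc S = ((1 - Γtot) * (1 - ∑ k, G k)) * S := by rw [hΓtot₂, one_mul]
    _ = (1 - Γtot) * ((1 - ∑ k, G k) * S) := by rw [mul_assoc]
    _ = -((1 - Γtot) * G j) := by rw [h4, mul_neg]
  rw [key i, hSval]
  by_cases hij : i = j
  · simp only [hij, if_pos]
    noncomm_ring
  · simp only [hij, if_neg, not_false_iff]
    noncomm_ring
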